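/- Let g : [0, ∞) → (0, ∞) be differentiable with g' ≤ 0, let α ∈ (0, 1), and set h_α(s) = α g(s) − g'(s) and C_α = ∫₀^∞ g(s)²/h_α(s) ds. Then for any t > 0 and any continuous function v : [0, t] → ℝ, (∫₀^t g(t−s) v(s) ds)² ≤ C_α · ∫₀^t h_α(t−s) v(s)² ds. -/

import Mathlib

open Set MeasureTheory

set_option maxHeartbeats 1000000 in
/-- Weighted Cauchy–Schwarz estimate: for g positive differentiable
non-increasing, α ∈ (0,1), h_α = αg − g', C_α = ∫₀^∞ g²/h_α (finite), and v
continuous on [0,t],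
(∫₀^t g(t−s)v(s) ds)² ≤ C_α ∫₀^t h_α(t−s)v(s)² ds. -/
theorem stmt5 (g : ℝ → ℝ) (α : ℝ) (hα : α ∈ Ioo (0 : ℝ) 1)
    (hgpos : ∀ s : ℝ, 0 ≤ s → 0 < g s)
    (hgdiff : ∀ s : ℝ, 0 ≤ s → DifferentiableAt ℝ g s)
    (hg' : ∀ s : ℝ, 0 ≤ s → deriv g s ≤ 0)
    (hα_int : IntegrableOn (fun s => (g s) ^ 2 / (α * g s - deriv g s)) (Ici 0))
    (t : ℝ) (ht : 0 < t) (v : ℝ → ℝ) (hv : ContinuousOn v (Icc 0 t)) :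
    (∫ s in (0 : ℝ)..t, g (t - s) * v s) ^ 2 ≤
      (∫ s in Ici (0 : ℝ), (g s) ^ 2 / (α * g s - deriv g s)) *
        ∫ s in (0 : ℝ)..t, (α * g (t - s) - deriv g (t - s)) * (v s) ^ 2 := by
  obtain ⟨hα0, hα1⟩ := hα
  set h : ℝ → ℝ := fun s => α * g s - deriv g s with hh
  have hgc : ContinuousOn g (Ici 0) := fun s hs => ((hgdiff s hs).continuousAt).continuousWithinAt
  have hpos : ∀ s : ℝ, 0 ≤ s → 0 < h s := by
    intro s hs
    have h1 := hg' s hs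
    have h2 := hgpos s hs
    simp only [hh]
    nlinarith
  -- integrability of deriv g on Icc 0 t
  have hderiv_int : IntegrableOn (deriv g) (Icc 0 t) := by
    have hneg : IntegrableOn (fun x => -deriv g x) (Ioc 0 t) := by
      apply intervalIntegral.integrableOn_deriv_of_nonneg (g := fun x => -g x)
      · exact (hgc.mono (fun x hx => hx.1)).neg
      · intro x hx
        exact ((hgdiff x hx.1.le).hasDerivAt).neg
      · intro x hx
        have := hg' x hx.1.le
        linarith
    rw [integrableOn_Icc_iff_integrableOn_Ioc]
    exact integrable_neg_iff.1 hneg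
  have hh_int : IntegrableOn h (Icc 0 t) := by
    apply Integrable.sub
    · exact ((hgc.mono (fun x hx => hx.1)).const_smul α).integrableOn_Icc |>.congr_fun
        (fun x _ => rfl) measurableSet_Icc
    · exact hderiv_int
  -- reflection preserves integrability on [0,t]
  have refl_int : ∀ F : ℝ → ℝ, IntegrableOn F (Icc 0 t) → IntegrableOn (fun s => F (t - s)) (Icc 0 t) := by
    intro F hF
    rw [integrableOn_Icc_iff_integrableOn_Ioc] at hF ⊢
    have h1 : IntervalIntegrable F volume 0 t :=
      (intervalIntegrable_iff_integrableOn_Ioc_of_le ht.le).2 hF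
    have h2 := h1.comp_sub_left t
    rw [sub_self, sub_zero] at h2
    exact (intervalIntegrable_iff_integrableOn_Ioc_of_le ht.le).1 h2.symm
  have hmaps : ∀ s ∈ Icc (0:ℝ) t, t - s ∈ Ici (0:ℝ) := fun s hs => by
    simp only [mem_Ici]; linarith [hs.2]
  set μ : Measure ℝ := volume.restrict (Ioc 0 t) with hμ
  -- the two L² functions
  set F : ℝ → ℝ := fun s => g (t - s) / Real.sqrt (h (t - s)) with hF
  set W : ℝ → ℝ := fun s => Real.sqrt (h (t - s)) * |v s| with hW
  -- measurability
  have mg : AEStronglyMeasurable (fun s => g (t - s)) μ := by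
    apply ContinuousOn.aestronglyMeasurable _ measurableSet_Ioc
    exact hgc.comp (continuous_const.sub continuous_id).continuousOn
      (fun s hs => hmaps s (Ioc_subset_Icc_self hs))
  have md : AEStronglyMeasurable (fun s => deriv g (t - s)) μ :=
    ((measurable_deriv g).comp (measurable_const.sub measurable_id)).aestronglyMeasurable
  have mh : AEStronglyMeasurable (fun s => h (t - s)) μ := (mg.const_mul α).sub md
  have msq : AEStronglyMeasurable (fun s => Real.sqrt (h (t - s))) μ :=
    Real.continuous_sqrt.comp_aestronglyMeasurable mh
  have mv : AEStronglyMeasurable v μ :=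
    (hv.mono Ioc_subset_Icc_self).aestronglyMeasurable measurableSet_Ioc
  have mF : AEStronglyMeasurable F μ :=
    (mg.aemeasurable.div msq.aemeasurable).aestronglyMeasurable
  have mW : AEStronglyMeasurable W μ :=
    msq.mul (continuous_abs.comp_aestronglyMeasurable mv)
  -- a.e. facts on Ioc 0 t
  have hae : ∀ᵐ s ∂μ, s ∈ Ioc (0:ℝ) t := self_mem_ae_restrict measurableSet_Ioc
  have hkey : ∀ s ∈ Ioc (0:ℝ) t, 0 < h (t - s) ∧ 0 < g (t - s) := by
    intro s hs
    have h0 : (0:ℝ) ≤ t - s := by linarith [hs.2]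
    exact ⟨hpos _ h0, hgpos _ h0⟩
  -- integrability of F^2
  have hφ : IntegrableOn (fun s => g s ^ 2 / h s) (Icc 0 t) :=
    hα_int.mono_set (fun x hx => hx.1)
  have hF2 : Integrable (fun s => F s ^ 2) μ := by
    apply ((refl_int _ hφ).mono_set Ioc_subset_Icc_self).congr
    filter_upwards [hae] with s hs
    obtain ⟨hh1, hg1⟩ := hkey s hs
    simp only [hF, div_pow, Real.sq_sqrt hh1.le]
  have hW2 : Integrable (fun s => W s ^ 2) μ := by
    have : IntegrableOn (fun s => h (t - s) * v s ^ 2) (Icc 0 t) :=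
      (refl_int h hh_int).mul_continuousOn (hv.pow 2) isCompact_Icc
    apply (this.mono_set Ioc_subset_Icc_self).congr
    filter_upwards [hae] with s hs
    obtain ⟨hh1, _⟩ := hkey s hs
    simp only [hW, mul_pow, Real.sq_sqrt hh1.le, sq_abs]
  -- Memℒp
  have two_eq : ENNReal.ofReal (2:ℝ) = 2 := by norm_num
  have hFp : MemLp F (ENNReal.ofReal 2) μ := by
    rw [two_eq]; exact (memLp_two_iff_integrable_sq mF).2 hF2
  have hWp : MemLp W (ENNReal.ofReal 2) μ := by
    rw [two_eq]; exact (memLp_two_iff_integrable_sq mW).2 hW2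
  have hFnn : 0 ≤ᵐ[μ] F := by
    filter_upwards [hae] with s hs
    obtain ⟨hh1, hg1⟩ := hkey s hs
    exact div_nonneg hg1.le (Real.sqrt_nonneg _)
  have hWnn : 0 ≤ᵐ[μ] W := Filter.Eventually.of_forall fun s =>
    mul_nonneg (Real.sqrt_nonneg _) (abs_nonneg _)
  have hpq : (2:ℝ).HolderConjugate 2 := Real.holderConjugate_iff.mpr ⟨one_lt_two, by norm_num⟩
  have key := integral_mul_le_Lp_mul_Lq_of_nonneg hpq hFnn hWnn hFp hWp
  -- convert rpow to pow in key
  have rw2 : ∀ f : ℝ → ℝ, (∫ a, f a ^ (2:ℝ) ∂μ) = ∫ a, f a ^ 2 ∂μ := by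
    intro f
    apply integral_congr_ae
    filter_upwards with a
    rw [show (2:ℝ) = ((2:ℕ):ℝ) by norm_num, Real.rpow_natCast]
  rw [rw2 F, rw2 W] at key
  set A := ∫ a, F a ^ 2 ∂μ with hA
  set B := ∫ a, W a ^ 2 ∂μ with hB
  have hAnn : 0 ≤ A := integral_nonneg fun a => sq_nonneg _
  have hBnn : 0 ≤ B := integral_nonneg fun a => sq_nonneg _
  -- squared Cauchy-Schwarz
  have hFWnn : 0 ≤ ∫ a, F a * W a ∂μ := by
    apply integral_nonneg_of_ae
    filter_upwards [hFnn, hWnn] with a h1 h2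
    exact mul_nonneg h1 h2
  have hCS : (∫ a, F a * W a ∂μ) ^ 2 ≤ A * B := by
    calc (∫ a, F a * W a ∂μ) ^ 2 ≤ (A ^ (1/2:ℝ) * B ^ (1/2:ℝ)) ^ 2 :=
          pow_le_pow_left₀ hFWnn key 2
      _ = A * B := by
          rw [mul_pow, ← Real.rpow_natCast (A ^ (1/2:ℝ)) 2, ← Real.rpow_natCast (B ^ (1/2:ℝ)) 2,
            ← Real.rpow_mul hAnn, ← Real.rpow_mul hBnn]
          norm_num
  -- LHS bound
  have hLHS : (∫ s in (0:ℝ)..t, g (t - s) * v s) ^ 2 ≤ (∫ a, F a * W a ∂μ) ^ 2 := by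
    rw [intervalIntegral.integral_of_le ht.le]
    have habs : |∫ s in Ioc (0:ℝ) t, g (t - s) * v s| ≤ ∫ a, F a * W a ∂μ := by
      rw [← Real.norm_eq_abs]
      refine (norm_integral_le_integral_norm _).trans_eq ?_
      apply integral_congr_ae
      filter_upwards [hae] with s hs
      obtain ⟨hh1, hg1⟩ := hkey s hs
      have hsne : Real.sqrt (h (t - s)) ≠ 0 := (Real.sqrt_pos.2 hh1).ne'
      simp only [hF, hW]
      rw [Real.norm_eq_abs, abs_mul, abs_of_pos hg1]
      field_simp
    calc (∫ s in Ioc (0:ℝ) t, g (t - s) * v s) ^ 2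
        = |∫ s in Ioc (0:ℝ) t, g (t - s) * v s| ^ 2 := (sq_abs _).symm
      _ ≤ (∫ a, F a * W a ∂μ) ^ 2 := pow_le_pow_left₀ (abs_nonneg _) habs 2
  -- A ≤ C_α
  have hAC : A ≤ ∫ s in Ici (0:ℝ), g s ^ 2 / (α * g s - deriv g s) := by
    have e1 : A = ∫ s in (0:ℝ)..t, g (t - s) ^ 2 / h (t - s) := by
      rw [intervalIntegral.integral_of_le ht.le]
      apply integral_congr_ae
      filter_upwards [hae] with s hs
      obtain ⟨hh1, _⟩ := hkey s hs
      simp only [hF, div_pow, Real.sq_sqrt hh1.le]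
    have e2 : (∫ s in (0:ℝ)..t, g (t - s) ^ 2 / h (t - s)) =
        ∫ s in (0:ℝ)..t, g s ^ 2 / h s := by
      have := intervalIntegral.integral_comp_sub_left (fun s => g s ^ 2 / h s) t
        (a := 0) (b := t)
      simpa using this
    rw [e1, e2, intervalIntegral.integral_of_le ht.le]
    apply setIntegral_mono_set hα_int
    · filter_upwards [self_mem_ae_restrict (measurableSet_Ici : MeasurableSet (Ici (0:ℝ)))] with s hs
      exact div_nonneg (sq_nonneg _) (hpos s hs).le
    · exact HasSubset.Subset.eventuallyLE (Ioc_subset_Icc_self.trans (fun x hx => hx.1))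
  -- B equals RHS integral
  have hBeq : B = ∫ s in (0:ℝ)..t, (α * g (t - s) - deriv g (t - s)) * v s ^ 2 := by
    rw [intervalIntegral.integral_of_le ht.le]
    apply integral_congr_ae
    filter_upwards [hae] with s hs
    obtain ⟨hh1, _⟩ := hkey s hs
    simp only [hW, mul_pow, Real.sq_sqrt hh1.le, sq_abs, hh]
    exact congrArg (· * v s ^ 2) (Real.sq_sqrt hh1.le)
  calc (∫ s in (0:ℝ)..t, g (t - s) * v s) ^ 2
      ≤ (∫ a, F a * W a ∂μ) ^ 2 := hLHS
    _ ≤ A * B := hCS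
    _ ≤ (∫ s in Ici (0:ℝ), g s ^ 2 / (α * g s - deriv g s)) * B :=
        mul_le_mul_of_nonneg_right hAC hBnn
    _ = _ := by rw [hBeq]
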